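/- In the duplicated gadget construction with ℓ copies x_1, …, x_ℓ of the vertex x, there exists a feasible edge set (one in which every ordered pair (p,q) has a q–p path all of whose vertices lie in the iBGP safe set S(p,q)) with at most ℓ · h* + ℓ + (m + n + 4)² edges, where h* is the minimum size of a hitting set for the instance T_1, …, T_m ⊆ [n]. -/
import Mathlib


/-- The vertices of the duplicated hitting-set gadget: `ℓ` copies `x k` of the
vertex `x`, dummy nodes `z`, `y`, `u`, `h`, element nodes `a i` for `i ∈ [n]`
and set nodes `b j` for `j ∈ [m]`. -/
inductive GV (L n m : ℕ) : Type
  | x : Fin L → GV L n m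
  | z : GV L n m
  | y : GV L n m
  | u : GV L n m
  | h : GV L n m
  | a : Fin n → GV L n m
  | b : Fin m → GV L n m
deriving DecidableEq

/-- `d` is a pseudometric (reflexive, symmetric, triangle inequality). -/
def IsPseudoMetric {α : Type*} (d : α → α → ℝ) : Prop :=
  (∀ p, d p p = 0) ∧ (∀ p q, d p q = d q p) ∧ (∀ p q r, d p r ≤ d p q + d q r)

/-- `d` is bounded above by the prescribed edge weights of the duplicated gadget
(indices are 1-based, via `·.val + 1`). -/
def GadgetEdgeBounds {L n m : ℕ} (T : Fin m → Finset (Fin n)) (ε : ℝ)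
    (d : GV L n m → GV L n m → ℝ) : Prop :=
  (∀ k : Fin L, d (GV.x k) GV.z ≤ 20 + (k.val + 1) * ε) ∧
  (∀ k : Fin L, ∀ j : Fin m,
    d (GV.x k) (GV.b j) ≤ 20 + 1.4 + ((k.val + 1) + (j.val + 1)) * ε) ∧
  d GV.z GV.y ≤ 1.5 ∧
  (∀ i : Fin n, d GV.z (GV.a i) ≤ 1 + (i.val + 1) * ε) ∧
  d GV.z GV.u ≤ 2 ∧
  (∀ i : Fin n, d (GV.a i) GV.u ≤ 1.1) ∧
  (∀ i : Fin n, ∀ j : Fin m, i ∈ T j →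
    d (GV.a i) (GV.b j) ≤ 1 + ((i.val + 1) + (j.val + 1)) * ε) ∧
  (∀ j : Fin m, d (GV.b j) GV.h ≤ 1 + (j.val + 1) * ε)

/-- `d` is the shortest-path metric of the duplicated gadget graph: it is the
pointwise greatest pseudometric bounded above by the gadget edge weights. -/
def IsGadgetSPMetric {L n m : ℕ} (T : Fin m → Finset (Fin n)) (ε : ℝ)
    (d : GV L n m → GV L n m → ℝ) : Prop :=
  IsPseudoMetric d ∧ GadgetEdgeBounds T ε d ∧
  ∀ d' : GV L n m → GV L n m → ℝ, IsPseudoMetric d' → GadgetEdgeBounds T ε d' →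
    ∀ p q, d' p q ≤ d p q

/-- The iBGP safe set of the ordered pair `(p,q)` for the metric `d`. -/
def iBGPSafeSet {α : Type*} (d : α → α → ℝ) (p q : α) : Set α :=
  {w | ∀ r, d p q < d p r → d w q < d w r} ∪ {q}

/-- `E` is a correct iBGP signaling graph: every ordered pair `(p,q)` has a
path from `q` to `p` all of whose vertices lie in the safe set `S(p,q)`. -/
def iBGPFeasible {α : Type*} (d : α → α → ℝ) (E : Set (Sym2 α)) : Prop :=
  ∀ p q : α, ∃ w : (SimpleGraph.fromEdgeSet E).Walk q p,
    ∀ v ∈ w.support, v ∈ iBGPSafeSet d p q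

/-- `Hs` is a hitting set for the instance `T`. -/
def IsHittingSet {n m : ℕ} (T : Fin m → Finset (Fin n)) (Hs : Finset (Fin n)) : Prop :=
  ∀ j : Fin m, ∃ i ∈ Hs, i ∈ T j

namespace Stmt7

open GV

noncomputable section

/-- 1-based real value of a Fin index. -/
def K {N : ℕ} (k : Fin N) : ℝ := k.val + 1

lemma Kle {N : ℕ} (k : Fin N) : K k ≤ (N : ℝ) := by
  have := k.is_lt
  unfold K
  exact_mod_cast this

lemma Kge1 {N : ℕ} (k : Fin N) : (1:ℝ) ≤ K k := by
  unfold K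
  have : (0:ℝ) ≤ k.val := by positivity
  linarith

lemma Kmul {N : ℕ} {ε : ℝ} (k : Fin N) (hε : 0 ≤ ε) (hN : (N:ℝ) * ε ≤ 0.01) :
    0 ≤ K k * ε ∧ K k * ε ≤ 0.01 :=
  ⟨mul_nonneg (le_trans zero_le_one (Kge1 k)) hε,
   le_trans (mul_le_mul_of_nonneg_right (Kle k) hε) hN⟩

lemma absPseudo {α : Type*} (f : α → ℝ) : IsPseudoMetric (fun p q => |f p - f q|) :=
  ⟨fun p => by simp, fun p q => abs_sub_comm _ _, fun p q r => abs_sub_le _ _ _⟩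

lemma pot {L n m : ℕ} {T : Fin m → Finset (Fin n)} {ε : ℝ}
    {d : GV L n m → GV L n m → ℝ} (hd : IsGadgetSPMetric T ε d)
    (f : GV L n m → ℝ) (hf : GadgetEdgeBounds T ε (fun p q => |f p - f q|))
    (p q : GV L n m) : f q - f p ≤ d p q := by
  have h1 : |f p - f q| ≤ d p q := hd.2.2 _ (absPseudo f) hf p q
  have h2 : f q - f p ≤ |f q - f p| := le_abs_self _
  rw [abs_sub_comm] at h2
  linarith

end
end Stmt7
namespace Stmt7

open GV

noncomputable section

variable {L n m : ℕ}

/-- potential realizing distances from `z`. -/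
def fz (ε : ℝ) : GV L n m → ℝ
  | x k => 20 + K k * ε
  | z => 0
  | y => 1.5
  | u => 2
  | a i => 1 + K i * ε
  | b j => 2 + K j * ε
  | h => 3

/-- potential realizing distances from `y`. -/
def fy (ε : ℝ) : GV L n m → ℝ
  | x k => 20 + K k * ε
  | z => 0
  | y => -1.5
  | u => 2
  | a i => 1 + K i * ε
  | b j => 2 + K j * ε
  | h => 3

/-- potential realizing distances from `u`. -/
def fu (ε : ℝ) : GV L n m → ℝ
  | x k => 22 + K k * ε
  | z => 2
  | y => 3.5
  | u => 0
  | a _ => 1.1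
  | b j => 2.1 + K j * ε
  | h => 3.1

/-- potential realizing distances from `h`. -/
def fh (ε : ℝ) : GV L n m → ℝ
  | x k => 22.4 + 2 * ε + K k * ε
  | z => 3
  | y => 4.5
  | u => 3.1
  | a i => 2 + K i * ε
  | b j => 1 + K j * ε
  | h => 0

/-- potential realizing distances from `a i0`. -/
def fa (ε : ℝ) (i0 : Fin n) : GV L n m → ℝ
  | x k => 21 + K i0 * ε + K k * ε
  | z => 1 + K i0 * ε
  | y => 2.5 + K i0 * ε
  | u => 1.1
  | a i => if i = i0 then 0 else 2 + K i0 * ε + K i * ε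
  | b j => 1 + K i0 * ε + K j * ε
  | h => 2 + K i0 * ε

/-- potential realizing distances from `b j0`. -/
def fb (ε : ℝ) (j0 : Fin m) : GV L n m → ℝ
  | x k => 21.4 + K j0 * ε + K k * ε
  | z => 2 + K j0 * ε
  | y => 3.5 + K j0 * ε
  | u => 2.1 + K j0 * ε
  | a i => 1 + K j0 * ε + K i * ε
  | b j => if j = j0 then 0 else 2 + K j0 * ε + K j * ε
  | h => 1 + K j0 * ε

/-- potential separating `x k1` and `x k2`. -/
def fp (ε : ℝ) (k1 k2 : Fin L) : GV L n m → ℝ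
  | x k => if k = k1 then 20 + K k1 * ε else if k = k2 then -(20 + K k2 * ε) else 0
  | _ => 0

section Bounds

variable {T : Fin m → Finset (Fin n)} {ε : ℝ}
variable (hε : 0 < ε) (hLε : (L:ℝ) * ε ≤ 0.01) (hnε : (n:ℝ) * ε ≤ 0.01)
  (hmε : (m:ℝ) * ε ≤ 0.01) (hε01 : ε ≤ 0.01)

lemma Kdef {N : ℕ} (k : Fin N) : ((k.val : ℝ) + 1) = K k := rfl

include hε hLε hnε hmε hε01

lemma fz_bounds : GadgetEdgeBounds T ε (fun p q : GV L n m => |fz ε p - fz ε q|) := by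
  refine ⟨fun k => ?_, fun k j => ?_, ?_, fun i => ?_, ?_, fun i => ?_,
    fun i j _ => ?_, fun j => ?_⟩ <;>
  simp only [fz, Kdef] <;> rw [abs_sub_le_iff] <;> constructor
  all_goals
    first
    | linarith [(Kmul ‹Fin L› hε.le hLε).1, (Kmul ‹Fin L› hε.le hLε).2,
        (Kmul ‹Fin m› hε.le hmε).1, (Kmul ‹Fin m› hε.le hmε).2,
        (Kmul ‹Fin n› hε.le hnε).1, (Kmul ‹Fin n› hε.le hnε).2]
    | linarith [(Kmul ‹Fin L› hε.le hLε).1, (Kmul ‹Fin L› hε.le hLε).2,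
        (Kmul ‹Fin m› hε.le hmε).1, (Kmul ‹Fin m› hε.le hmε).2]
    | linarith [(Kmul ‹Fin L› hε.le hLε).1, (Kmul ‹Fin L› hε.le hLε).2,
        (Kmul ‹Fin n› hε.le hnε).1, (Kmul ‹Fin n› hε.le hnε).2]
    | linarith [(Kmul ‹Fin L› hε.le hLε).1, (Kmul ‹Fin L› hε.le hLε).2]
    | linarith [(Kmul ‹Fin m› hε.le hmε).1, (Kmul ‹Fin m› hε.le hmε).2,
        (Kmul ‹Fin n› hε.le hnε).1, (Kmul ‹Fin n› hε.le hnε).2]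
    | linarith [(Kmul ‹Fin m› hε.le hmε).1, (Kmul ‹Fin m› hε.le hmε).2]
    | linarith [(Kmul ‹Fin n› hε.le hnε).1, (Kmul ‹Fin n› hε.le hnε).2]
    | linarith

lemma fy_bounds : GadgetEdgeBounds T ε (fun p q : GV L n m => |fy ε p - fy ε q|) := by
  refine ⟨fun k => ?_, fun k j => ?_, ?_, fun i => ?_, ?_, fun i => ?_,
    fun i j _ => ?_, fun j => ?_⟩ <;>
  simp only [fy, Kdef] <;> rw [abs_sub_le_iff] <;> constructor
  all_goals
    first
    | linarith [(Kmul ‹Fin L› hε.le hLε).1, (Kmul ‹Fin L› hε.le hLε).2,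
        (Kmul ‹Fin m› hε.le hmε).1, (Kmul ‹Fin m› hε.le hmε).2,
        (Kmul ‹Fin n› hε.le hnε).1, (Kmul ‹Fin n› hε.le hnε).2]
    | linarith [(Kmul ‹Fin L› hε.le hLε).1, (Kmul ‹Fin L› hε.le hLε).2,
        (Kmul ‹Fin m› hε.le hmε).1, (Kmul ‹Fin m› hε.le hmε).2]
    | linarith [(Kmul ‹Fin L› hε.le hLε).1, (Kmul ‹Fin L› hε.le hLε).2,
        (Kmul ‹Fin n› hε.le hnε).1, (Kmul ‹Fin n› hε.le hnε).2]
    | linarith [(Kmul ‹Fin L› hε.le hLε).1, (Kmul ‹Fin L› hε.le hLε).2]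
    | linarith [(Kmul ‹Fin m› hε.le hmε).1, (Kmul ‹Fin m› hε.le hmε).2,
        (Kmul ‹Fin n› hε.le hnε).1, (Kmul ‹Fin n› hε.le hnε).2]
    | linarith [(Kmul ‹Fin m› hε.le hmε).1, (Kmul ‹Fin m› hε.le hmε).2]
    | linarith [(Kmul ‹Fin n› hε.le hnε).1, (Kmul ‹Fin n› hε.le hnε).2]
    | linarith

lemma fu_bounds : GadgetEdgeBounds T ε (fun p q : GV L n m => |fu ε p - fu ε q|) := by
  refine ⟨fun k => ?_, fun k j => ?_, ?_, fun i => ?_, ?_, fun i => ?_,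
    fun i j _ => ?_, fun j => ?_⟩ <;>
  simp only [fu, Kdef] <;> rw [abs_sub_le_iff] <;> constructor
  all_goals
    first
    | linarith [(Kmul ‹Fin L› hε.le hLε).1, (Kmul ‹Fin L› hε.le hLε).2,
        (Kmul ‹Fin m› hε.le hmε).1, (Kmul ‹Fin m› hε.le hmε).2,
        (Kmul ‹Fin n› hε.le hnε).1, (Kmul ‹Fin n› hε.le hnε).2]
    | linarith [(Kmul ‹Fin L› hε.le hLε).1, (Kmul ‹Fin L› hε.le hLε).2,
        (Kmul ‹Fin m› hε.le hmε).1, (Kmul ‹Fin m› hε.le hmε).2]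
    | linarith [(Kmul ‹Fin L› hε.le hLε).1, (Kmul ‹Fin L› hε.le hLε).2,
        (Kmul ‹Fin n› hε.le hnε).1, (Kmul ‹Fin n› hε.le hnε).2]
    | linarith [(Kmul ‹Fin L› hε.le hLε).1, (Kmul ‹Fin L› hε.le hLε).2]
    | linarith [(Kmul ‹Fin m› hε.le hmε).1, (Kmul ‹Fin m› hε.le hmε).2,
        (Kmul ‹Fin n› hε.le hnε).1, (Kmul ‹Fin n› hε.le hnε).2]
    | linarith [(Kmul ‹Fin m› hε.le hmε).1, (Kmul ‹Fin m› hε.le hmε).2]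
    | linarith [(Kmul ‹Fin n› hε.le hnε).1, (Kmul ‹Fin n› hε.le hnε).2]
    | linarith

lemma fh_bounds : GadgetEdgeBounds T ε (fun p q : GV L n m => |fh ε p - fh ε q|) := by
  refine ⟨fun k => ?_, fun k j => ?_, ?_, fun i => ?_, ?_, fun i => ?_,
    fun i j _ => ?_, fun j => ?_⟩ <;>
  simp only [fh, Kdef] <;> rw [abs_sub_le_iff] <;> constructor
  all_goals
    first
    | linarith [(Kmul ‹Fin L› hε.le hLε).1, (Kmul ‹Fin L› hε.le hLε).2,
        (Kmul ‹Fin m› hε.le hmε).1, (Kmul ‹Fin m› hε.le hmε).2,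
        mul_le_mul_of_nonneg_right (Kge1 ‹Fin m›) hε.le]
    | linarith [(Kmul ‹Fin L› hε.le hLε).1, (Kmul ‹Fin L› hε.le hLε).2,
        (Kmul ‹Fin m› hε.le hmε).1, (Kmul ‹Fin m› hε.le hmε).2]
    | linarith [(Kmul ‹Fin L› hε.le hLε).1, (Kmul ‹Fin L› hε.le hLε).2,
        (Kmul ‹Fin n› hε.le hnε).1, (Kmul ‹Fin n› hε.le hnε).2]
    | linarith [(Kmul ‹Fin L› hε.le hLε).1, (Kmul ‹Fin L› hε.le hLε).2]
    | linarith [(Kmul ‹Fin m› hε.le hmε).1, (Kmul ‹Fin m› hε.le hmε).2,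
        (Kmul ‹Fin n› hε.le hnε).1, (Kmul ‹Fin n› hε.le hnε).2]
    | linarith [(Kmul ‹Fin m› hε.le hmε).1, (Kmul ‹Fin m› hε.le hmε).2]
    | linarith [(Kmul ‹Fin n› hε.le hnε).1, (Kmul ‹Fin n› hε.le hnε).2]
    | linarith

lemma fa_bounds (i0 : Fin n) :
    GadgetEdgeBounds T ε (fun p q : GV L n m => |fa ε i0 p - fa ε i0 q|) := by
  have h0 := (Kmul i0 hε.le hnε).1
  have h0' := (Kmul i0 hε.le hnε).2
  refine ⟨fun k => ?_, fun k j => ?_, ?_, fun i => ?_, ?_, fun i => ?_,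
    fun i j _ => ?_, fun j => ?_⟩ <;>
  simp only [fa, Kdef] <;> (try split_ifs with hii) <;> (try subst hii)
  all_goals rw [abs_sub_le_iff]; constructor
  all_goals
    first
    | linarith [(Kmul ‹Fin L› hε.le hLε).1, (Kmul ‹Fin L› hε.le hLε).2,
        (Kmul ‹Fin m› hε.le hmε).1, (Kmul ‹Fin m› hε.le hmε).2,
        (Kmul ‹Fin n› hε.le hnε).1, (Kmul ‹Fin n› hε.le hnε).2]
    | linarith [(Kmul ‹Fin L› hε.le hLε).1, (Kmul ‹Fin L› hε.le hLε).2,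
        (Kmul ‹Fin m› hε.le hmε).1, (Kmul ‹Fin m› hε.le hmε).2]
    | linarith [(Kmul ‹Fin L› hε.le hLε).1, (Kmul ‹Fin L› hε.le hLε).2,
        (Kmul ‹Fin n› hε.le hnε).1, (Kmul ‹Fin n› hε.le hnε).2]
    | linarith [(Kmul ‹Fin L› hε.le hLε).1, (Kmul ‹Fin L› hε.le hLε).2]
    | linarith [(Kmul ‹Fin m› hε.le hmε).1, (Kmul ‹Fin m› hε.le hmε).2,
        (Kmul ‹Fin n› hε.le hnε).1, (Kmul ‹Fin n› hε.le hnε).2]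
    | linarith [(Kmul ‹Fin m› hε.le hmε).1, (Kmul ‹Fin m› hε.le hmε).2]
    | linarith [(Kmul ‹Fin n› hε.le hnε).1, (Kmul ‹Fin n› hε.le hnε).2]
    | linarith

lemma fb_bounds (j0 : Fin m) :
    GadgetEdgeBounds T ε (fun p q : GV L n m => |fb ε j0 p - fb ε j0 q|) := by
  have h0 := (Kmul j0 hε.le hmε).1
  have h0' := (Kmul j0 hε.le hmε).2
  refine ⟨fun k => ?_, fun k j => ?_, ?_, fun i => ?_, ?_, fun i => ?_,
    fun i j _ => ?_, fun j => ?_⟩ <;>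
  simp only [fb, Kdef] <;> (try split_ifs with hjj) <;> (try subst hjj)
  all_goals rw [abs_sub_le_iff]; constructor
  all_goals
    first
    | linarith [(Kmul ‹Fin L› hε.le hLε).1, (Kmul ‹Fin L› hε.le hLε).2,
        (Kmul ‹Fin m› hε.le hmε).1, (Kmul ‹Fin m› hε.le hmε).2,
        (Kmul ‹Fin n› hε.le hnε).1, (Kmul ‹Fin n› hε.le hnε).2]
    | linarith [(Kmul ‹Fin L› hε.le hLε).1, (Kmul ‹Fin L› hε.le hLε).2,
        (Kmul ‹Fin m› hε.le hmε).1, (Kmul ‹Fin m› hε.le hmε).2]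
    | linarith [(Kmul ‹Fin L› hε.le hLε).1, (Kmul ‹Fin L› hε.le hLε).2,
        (Kmul ‹Fin n› hε.le hnε).1, (Kmul ‹Fin n› hε.le hnε).2]
    | linarith [(Kmul ‹Fin L› hε.le hLε).1, (Kmul ‹Fin L› hε.le hLε).2]
    | linarith [(Kmul ‹Fin m› hε.le hmε).1, (Kmul ‹Fin m› hε.le hmε).2,
        (Kmul ‹Fin n› hε.le hnε).1, (Kmul ‹Fin n› hε.le hnε).2]
    | linarith [(Kmul ‹Fin m› hε.le hmε).1, (Kmul ‹Fin m› hε.le hmε).2]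
    | linarith [(Kmul ‹Fin n› hε.le hnε).1, (Kmul ‹Fin n› hε.le hnε).2]
    | linarith

lemma fp_bounds (k1 k2 : Fin L) :
    GadgetEdgeBounds T ε (fun p q : GV L n m => |fp ε k1 k2 p - fp ε k1 k2 q|) := by
  have h1 := (Kmul k1 hε.le hLε).1
  have h1' := (Kmul k1 hε.le hLε).2
  have h2 := (Kmul k2 hε.le hLε).1
  have h2' := (Kmul k2 hε.le hLε).2
  refine ⟨fun k => ?_, fun k j => ?_, ?_, fun i => ?_, ?_, fun i => ?_,
    fun i j _ => ?_, fun j => ?_⟩ <;>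
  simp only [fp, Kdef] <;> (try split_ifs with hk1 hk2) <;> (try subst hk1) <;> (try subst hk2)
  all_goals rw [abs_sub_le_iff]; constructor
  all_goals
    first
    | linarith [(Kmul ‹Fin L› hε.le hLε).1, (Kmul ‹Fin L› hε.le hLε).2,
        (Kmul ‹Fin m› hε.le hmε).1, (Kmul ‹Fin m› hε.le hmε).2,
        (Kmul ‹Fin n› hε.le hnε).1, (Kmul ‹Fin n› hε.le hnε).2]
    | linarith [(Kmul ‹Fin L› hε.le hLε).1, (Kmul ‹Fin L› hε.le hLε).2,
        (Kmul ‹Fin m› hε.le hmε).1, (Kmul ‹Fin m› hε.le hmε).2]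
    | linarith [(Kmul ‹Fin L› hε.le hLε).1, (Kmul ‹Fin L› hε.le hLε).2,
        (Kmul ‹Fin n› hε.le hnε).1, (Kmul ‹Fin n› hε.le hnε).2]
    | linarith [(Kmul ‹Fin L› hε.le hLε).1, (Kmul ‹Fin L› hε.le hLε).2]
    | linarith [(Kmul ‹Fin m› hε.le hmε).1, (Kmul ‹Fin m› hε.le hmε).2,
        (Kmul ‹Fin n› hε.le hnε).1, (Kmul ‹Fin n› hε.le hnε).2]
    | linarith [(Kmul ‹Fin m› hε.le hmε).1, (Kmul ‹Fin m› hε.le hmε).2]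
    | linarith [(Kmul ‹Fin n› hε.le hnε).1, (Kmul ‹Fin n› hε.le hnε).2]
    | linarith


end Bounds

end
end Stmt7
namespace Stmt7

open GV

/-- All metric facts needed downstream, in expanded linear form. -/
structure Facts (L n m : ℕ) (T : Fin m → Finset (Fin n)) (ε : ℝ)
    (d : GV L n m → GV L n m → ℝ) : Prop where
  refl : ∀ p, d p p = 0
  symm : ∀ p q, d p q = d q p
  tri : ∀ p q r, d p r ≤ d p q + d q r
  epos : 0 < ε
  eps01 : ε ≤ 0.01
  sL : ∀ k : Fin L, 0 ≤ K k * ε ∧ K k * ε ≤ 0.01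
  sn : ∀ i : Fin n, 0 ≤ K i * ε ∧ K i * ε ≤ 0.01
  sm : ∀ j : Fin m, 0 ≤ K j * ε ∧ K j * ε ≤ 0.01
  -- upper bounds
  u_xz : ∀ k, d (x k) z ≤ 20 + K k * ε
  u_xb : ∀ k j, d (x k) (b j) ≤ 21.4 + K k * ε + K j * ε
  u_zy : d z y ≤ 1.5
  u_za : ∀ i, d z (a i) ≤ 1 + K i * ε
  u_zu : d z u ≤ 2
  u_au : ∀ i, d (a i) u ≤ 1.1
  u_ab : ∀ i j, i ∈ T j → d (a i) (b j) ≤ 1 + K i * ε + K j * ε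
  u_bh : ∀ j, d (b j) h ≤ 1 + K j * ε
  u_zb : ∀ j, d z (b j) ≤ 2.03
  u_zh : d z h ≤ 3.04
  u_xa : ∀ k i, d (x k) (a i) ≤ 21 + K k * ε + K i * ε
  u_xy : ∀ k, d (x k) y ≤ 21.5 + K k * ε
  u_xu : ∀ k, d (x k) u ≤ 22 + K k * ε
  u_xh : ∀ k, d (x k) h ≤ 22.4 + 2 * ε + K k * ε
  -- lower bounds
  l_zx : ∀ k, 20 + K k * ε ≤ d z (x k)
  l_zy : 1.5 ≤ d z y
  l_za : ∀ i, 1 + K i * ε ≤ d z (a i)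
  l_zu : 2 ≤ d z u
  l_zb : ∀ j, 2 ≤ d z (b j)
  l_zh : 3 ≤ d z h
  l_yx : ∀ k, 21.5 + K k * ε ≤ d y (x k)
  l_ya : ∀ i, 2.5 ≤ d y (a i)
  l_ux : ∀ k, 22 + K k * ε ≤ d u (x k)
  l_ua : ∀ i, 1.1 ≤ d u (a i)
  l_ax : ∀ i k, 21 + K i * ε + K k * ε ≤ d (a i) (x k)
  l_ab : ∀ i j, 1 + K i * ε + K j * ε ≤ d (a i) (b j)
  l_ah : ∀ i, 2 ≤ d (a i) h
  l_bx : ∀ j k, 21.4 + K j * ε + K k * ε ≤ d (b j) (x k)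
  l_hx : ∀ k, 22.4 + 2 * ε + K k * ε ≤ d h (x k)
  l_xx : ∀ k k', k ≠ k' → 40 + K k * ε + K k' * ε ≤ d (x k) (x k')

namespace Facts

variable {L n m : ℕ} {T : Fin m → Finset (Fin n)} {ε : ℝ}
  {d : GV L n m → GV L n m → ℝ} (F : Facts L n m T ε d)

include F

lemma nonneg (p q : GV L n m) : 0 ≤ d p q := by
  have h1 := F.tri p q p
  have h2 := F.symm q p
  have h3 := F.refl p
  linarith

/-- `z` is safe for the pair `(x k, x k')`. -/
lemma safeB (k k' : Fin L) (hkk : k ≠ k') :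
    ∀ r, d (x k) (x k') < d (x k) r → d z (x k') < d z r := by
  intro r hr
  have h1 := F.l_xx k k' hkk
  have h2 := F.u_xz k
  have h3 : d z (x k') ≤ 20 + K k' * ε := by rw [F.symm]; exact F.u_xz k'
  have h4 := F.tri (x k) z r
  linarith

/-- small upper bound on `d z c` for every non-`x` vertex `c`. -/
lemma zcore_le (c : GV L n m) (hc : ∀ k, c ≠ x k) : d z c ≤ 3.04 := by
  cases c with
  | x k => exact absurd rfl (hc k)
  | z => rw [F.refl]; norm_num
  | y => linarith [F.u_zy]
  | u => linarith [F.u_zu]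
  | h => exact F.u_zh
  | a i => linarith [F.u_za i, (F.sn i).1, (F.sn i).2]
  | b j => linarith [F.u_zb j]

/-- `z` is safe for the pair `(v, x k)` when `d v (x ·)` has exact value `c + K · * ε`. -/
lemma safeC (v : GV L n m) (c : ℝ) (hc : 18 ≤ c) (hvz : d v z ≤ 3.04)
    (hlb : ∀ k', c + K k' * ε ≤ d v (x k')) (hub : ∀ k', d v (x k') ≤ c + K k' * ε)
    (k : Fin L) : ∀ r, d v (x k) < d v r → d z (x k) < d z r := by
  intro r hr
  have key : ∀ c' : GV L n m, d z c' ≤ 3.04 → ¬ d v (x k) < d v c' := by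
    intro c' hc' hlt
    have h1 := F.tri v z c'
    have h3 := hlb k
    have h4 := (F.sL k).1
    have h5 : d v z ≤ 3.04 := hvz
    linarith
  cases r with
  | x k'' =>
      have h1 := hlb k
      have h2 := hub k''
      have h3 : K k * ε < K k'' * ε := by linarith
      have h4 : d z (x k) ≤ 20 + K k * ε := by rw [F.symm]; exact F.u_xz k
      have h5 := F.l_zx k''
      linarith
  | z => exact absurd hr (key GV.z (by rw [F.refl]; norm_num))
  | y => exact absurd hr (key GV.y (F.zcore_le GV.y (fun _ hk => by cases hk)))
  | u => exact absurd hr (key GV.u (F.zcore_le GV.u (fun _ hk => by cases hk)))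
  | h => exact absurd hr (key GV.h (F.zcore_le GV.h (fun _ hk => by cases hk)))
  | a i => exact absurd hr (key (GV.a i) (F.zcore_le (GV.a i) (fun _ hk => by cases hk)))
  | b j => exact absurd hr (key (GV.b j) (F.zcore_le (GV.b j) (fun _ hk => by cases hk)))

/-- `z` is safe for `(x k, z)`-type pairs. -/
lemma safeD_z (k : Fin L) : ∀ r, d (x k) z < d (x k) r → d z z < d z r := by
  intro r hr
  rw [F.refl]
  cases r with
  | x k'' => linarith [F.l_zx k'', (F.sL k'').1]
  | z => exact absurd hr (lt_irrefl _)
  | y => linarith [F.l_zy]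
  | u => linarith [F.l_zu]
  | h => linarith [F.l_zh]
  | a i => linarith [F.l_za i, (F.sn i).1]
  | b j => linarith [F.l_zb j]

lemma safeD_y (k : Fin L) : ∀ r, d (x k) y < d (x k) r → d z y < d z r := by
  intro r hr
  have hy : 21.5 + K k * ε ≤ d (x k) y := by rw [F.symm]; exact F.l_yx k
  cases r with
  | x k'' => linarith [F.u_zy, F.l_zx k'', (F.sL k'').1]
  | z => exact absurd hr (by linarith [F.u_xz k])
  | y => exact absurd hr (lt_irrefl _)
  | u => linarith [F.u_zy, F.l_zu]
  | h => linarith [F.u_zy, F.l_zh]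
  | a i => exact absurd hr (by linarith [F.u_xa k i, (F.sn i).2])
  | b j => exact absurd hr (by linarith [F.u_xb k j, (F.sm j).2])

lemma safeD_u (k : Fin L) : ∀ r, d (x k) u < d (x k) r → d z u < d z r := by
  intro r hr
  have hu : 22 + K k * ε ≤ d (x k) u := by rw [F.symm]; exact F.l_ux k
  cases r with
  | x k'' => linarith [F.u_zu, F.l_zx k'', (F.sL k'').1]
  | z => exact absurd hr (by linarith [F.u_xz k])
  | y => exact absurd hr (by linarith [F.u_xy k])
  | u => exact absurd hr (lt_irrefl _)
  | h => linarith [F.u_zu, F.l_zh]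
  | a i => exact absurd hr (by linarith [F.u_xa k i, (F.sn i).2])
  | b j => exact absurd hr (by linarith [F.u_xb k j, (F.sm j).2])

lemma safeD_h (k : Fin L) : ∀ r, d (x k) h < d (x k) r → d z h < d z r := by
  intro r hr
  have hh : 22.4 + 2 * ε + K k * ε ≤ d (x k) h := by rw [F.symm]; exact F.l_hx k
  have he := F.epos
  cases r with
  | x k'' => linarith [F.u_zh, F.l_zx k'', (F.sL k'').1]
  | z => exact absurd hr (by linarith [F.u_xz k])
  | y => exact absurd hr (by linarith [F.u_xy k])
  | u => exact absurd hr (by linarith [F.u_xu k])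
  | h => exact absurd hr (lt_irrefl _)
  | a i => exact absurd hr (by linarith [F.u_xa k i, (F.sn i).2])
  | b j => exact absurd hr (by linarith [F.u_xb k j, (F.sm j).2])

lemma safeD_a (k : Fin L) (i : Fin n) :
    ∀ r, d (x k) (a i) < d (x k) r → d z (a i) < d z r := by
  intro r hr
  have ha : 21 + K i * ε + K k * ε ≤ d (x k) (a i) := by rw [F.symm]; exact F.l_ax i k
  have hi1 := (F.sn i).1
  have hi2 := (F.sn i).2
  have hza := F.u_za i
  cases r with
  | x k'' => linarith [F.l_zx k'', (F.sL k'').1]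
  | z => exact absurd hr (by linarith [F.u_xz k])
  | y => linarith [F.l_zy]
  | u => linarith [F.l_zu]
  | h => linarith [F.l_zh]
  | a i' =>
      have h2 := F.u_xa k i'
      have h3 : K i * ε < K i' * ε := by linarith
      linarith [F.l_za i']
  | b j => linarith [F.l_zb j]

lemma safeE (k : Fin L) (j : Fin m) (i : Fin n) (hiT : i ∈ T j) :
    ∀ r, d (x k) (b j) < d (x k) r → d (a i) (b j) < d (a i) r := by
  intro r hr
  have hb : 21.4 + K j * ε + K k * ε ≤ d (x k) (b j) := by rw [F.symm]; exact F.l_bx j k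
  have hab := F.u_ab i j hiT
  have hi1 := (F.sn i).1
  have hi2 := (F.sn i).2
  have hj1 := (F.sm j).1
  have hj2 := (F.sm j).2
  cases r with
  | x k'' => linarith [F.l_ax i k'', (F.sL k'').1]
  | z => exact absurd hr (by linarith [F.u_xz k])
  | y => have : 2.5 ≤ d (a i) y := by rw [F.symm]; exact F.l_ya i
         linarith
  | u => have : 1.1 ≤ d (a i) u := by rw [F.symm]; exact F.l_ua i
         linarith
  | h => linarith [F.l_ah i]
  | a i' => exact absurd hr (by linarith [F.u_xa k i', (F.sn i').2])
  | b j' =>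
      have h2 := F.u_xb k j'
      have h3 : K j * ε < K j' * ε := by linarith
      linarith [F.l_ab i j']


end Facts

end Stmt7
namespace Stmt7

open GV

/-- indicator of `h`, used to refute the `m = 0` case. -/
def chi {L n m : ℕ} : GV L n m → ℝ
  | GV.x _ => 0
  | GV.z => 0
  | GV.y => 0
  | GV.u => 0
  | GV.h => 1
  | GV.a _ => 0
  | GV.b _ => 0

/-- the non-`x` vertices. -/
def core (L n m : ℕ) : Finset (GV L n m) :=
  ({GV.z, GV.y, GV.u, GV.h} : Finset _) ∪ (Finset.univ.image GV.a) ∪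
    (Finset.univ.image GV.b)

lemma mem_core {L n m : ℕ} (v : GV L n m) (hv : ∀ k, v ≠ GV.x k) :
    v ∈ core L n m := by
  cases v with
  | x k => exact absurd rfl (hv k)
  | a i =>
      exact Finset.mem_union_left _ (Finset.mem_union_right _
        (Finset.mem_image_of_mem _ (Finset.mem_univ i)))
  | b j => exact Finset.mem_union_right _ (Finset.mem_image_of_mem _ (Finset.mem_univ j))
  | _ => simp [core]

lemma core_card (L n m : ℕ) : (core L n m).card ≤ 4 + n + m := by
  unfold core
  refine le_trans (Finset.card_union_le _ _) ?_
  have h1 : (({GV.z, GV.y, GV.u, GV.h} : Finset (GV L n m)) ∪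
      Finset.univ.image GV.a).card ≤ 4 + n := by
    refine le_trans (Finset.card_union_le _ _) ?_
    have h2 : ({GV.z, GV.y, GV.u, GV.h} : Finset (GV L n m)).card ≤ 4 := by
      refine le_trans (Finset.card_insert_le _ _) ?_
      refine Nat.succ_le_succ ?_
      refine le_trans (Finset.card_insert_le _ _) ?_
      refine Nat.succ_le_succ ?_
      refine le_trans (Finset.card_insert_le _ _) ?_
      simp
    have h3 : ((Finset.univ.image (GV.a : Fin n → GV L n m))).card ≤ n := by
      refine le_trans (Finset.card_image_le) ?_
      simp
    omega
  have h4 : ((Finset.univ.image (GV.b : Fin m → GV L n m))).card ≤ m := by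
    refine le_trans (Finset.card_image_le) ?_
    simp
  omega

/-- the feasible edge set. -/
def gE (L n m : ℕ) (Hs : Finset (Fin n)) : Finset (Sym2 (GV L n m)) :=
  ((core L n m) ×ˢ (core L n m)).image (fun pq => s(pq.1, pq.2)) ∪
    Finset.univ.image (fun k : Fin L => s(GV.x k, GV.z)) ∪
    (Finset.univ ×ˢ Hs).image (fun p : Fin L × Fin n => s(GV.x p.1, GV.a p.2))

lemma gE_card (L n m : ℕ) (Hs : Finset (Fin n)) :
    (gE L n m Hs).card ≤ L * Hs.card + L + (m + n + 4) ^ 2 := by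
  unfold gE
  refine le_trans (Finset.card_union_le _ _) ?_
  have h1 := Finset.card_union_le
    (((core L n m) ×ˢ (core L n m)).image (fun pq => s(pq.1, pq.2)))
    (Finset.univ.image (fun k : Fin L => s(GV.x k, GV.z)))
  have h2 : (((core L n m) ×ˢ (core L n m)).image
      (fun pq => s(pq.1, pq.2))).card ≤ (m + n + 4) ^ 2 := by
    refine le_trans (Finset.card_image_le) ?_
    rw [Finset.card_product]
    have := core_card L n m
    have h5 : (m + n + 4) ^ 2 = (m + n + 4) * (m + n + 4) := by ring
    have h6 : (core L n m).card ≤ m + n + 4 := by omega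
    rw [h5]
    exact Nat.mul_le_mul h6 h6
  have h3 : (Finset.univ.image (fun k : Fin L => s(GV.x k, (GV.z : GV L n m)))).card ≤ L := by
    refine le_trans (Finset.card_image_le) ?_
    simp
  have h4 : ((Finset.univ ×ˢ Hs).image
      (fun p : Fin L × Fin n => s(GV.x p.1, (GV.a p.2 : GV L n m)))).card ≤ L * Hs.card := by
    refine le_trans (Finset.card_image_le) ?_
    rw [Finset.card_product]
    simp
  omega

lemma mem_gE_core {L n m : ℕ} {Hs : Finset (Fin n)} {p q : GV L n m}
    (hp : p ∈ core L n m) (hq : q ∈ core L n m) : s(p, q) ∈ gE L n m Hs := by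
  have h := Finset.mem_image_of_mem (fun pq : GV L n m × GV L n m => s(pq.1, pq.2))
    (show (p, q) ∈ (core L n m) ×ˢ (core L n m) from Finset.mem_product.mpr ⟨hp, hq⟩)
  unfold gE
  rw [Finset.mem_union, Finset.mem_union]
  exact Or.inl (Or.inl h)

lemma mem_gE_xz {L n m : ℕ} {Hs : Finset (Fin n)} (k : Fin L) :
    s(GV.x k, GV.z) ∈ gE L n m Hs := by
  have h := Finset.mem_image_of_mem (fun k : Fin L => s(GV.x k, (GV.z : GV L n m)))
    (Finset.mem_univ k)
  unfold gE
  rw [Finset.mem_union, Finset.mem_union]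
  exact Or.inl (Or.inr h)

lemma mem_gE_xa {L n m : ℕ} {Hs : Finset (Fin n)} (k : Fin L) {i : Fin n}
    (hi : i ∈ Hs) : s(GV.x k, GV.a i) ∈ gE L n m Hs := by
  have h := Finset.mem_image_of_mem (fun p : Fin L × Fin n => s(GV.x p.1, (GV.a p.2 : GV L n m)))
    (show (k, i) ∈ Finset.univ ×ˢ Hs from Finset.mem_product.mpr ⟨Finset.mem_univ k, hi⟩)
  unfold gE
  rw [Finset.mem_union]
  exact Or.inr h

section Walks

open SimpleGraph

variable {α : Type*} (d : α → α → ℝ) (E : Set (Sym2 α))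

lemma feas_nil (p : α) :
    ∃ w : (fromEdgeSet E).Walk p p, ∀ v ∈ w.support, v ∈ iBGPSafeSet d p p := by
  refine ⟨.nil, ?_⟩
  intro v hv
  simp only [Walk.support_nil, List.mem_singleton] at hv
  subst hv
  exact Or.inr rfl

lemma feas_one {p q : α} (he : s(q, p) ∈ E) (hne : q ≠ p) :
    ∃ w : (fromEdgeSet E).Walk q p, ∀ v ∈ w.support, v ∈ iBGPSafeSet d p q := by
  refine ⟨.cons ((fromEdgeSet_adj _).mpr ⟨he, hne⟩) .nil, ?_⟩
  intro v hv
  simp only [Walk.support_cons, Walk.support_nil, List.mem_cons,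
    List.mem_singleton, List.not_mem_nil, or_false] at hv
  rcases hv with h | h
  · exact Or.inr h
  · subst h
    exact Or.inl fun r hh => hh

lemma feas_two {p q w0 : α} (h1 : s(q, w0) ∈ E) (h2 : s(w0, p) ∈ E)
    (hq : q ≠ w0) (hw : w0 ≠ p)
    (hs : ∀ r, d p q < d p r → d w0 q < d w0 r) :
    ∃ w : (fromEdgeSet E).Walk q p, ∀ v ∈ w.support, v ∈ iBGPSafeSet d p q := by
  refine ⟨.cons ((fromEdgeSet_adj _).mpr ⟨h1, hq⟩)
    (.cons ((fromEdgeSet_adj _).mpr ⟨h2, hw⟩) .nil), ?_⟩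
  intro v hv
  simp only [Walk.support_cons, Walk.support_nil, List.mem_cons,
    List.mem_singleton, List.not_mem_nil, or_false] at hv
  rcases hv with h | h | h
  · exact Or.inr h
  · subst h
    exact Or.inl hs
  · subst h
    exact Or.inl fun r hh => hh

end Walks

end Stmt7
set_option maxHeartbeats 4000000 in
/-- In the duplicated gadget with `ℓ` copies of `x` (with sufficiently small
`ε > 0` and `d` the induced shortest-path metric), there is a feasible iBGP edge
set with at most `ℓ · h* + ℓ + (m + n + 4)²` edges, where `h*` is the minimum
hitting set size. -/
theorem stmt7 (L n m : ℕ) (hL : 1 ≤ L) (T : Fin m → Finset (Fin n))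
    (hstar : ℕ)
    (hstar_ex : ∃ Hs : Finset (Fin n), IsHittingSet T Hs ∧ Hs.card = hstar)
    (hstar_min : ∀ Hs : Finset (Fin n), IsHittingSet T Hs → hstar ≤ Hs.card) :
    ∃ ε₀ : ℝ, 0 < ε₀ ∧ ∀ ε : ℝ, 0 < ε → ε < ε₀ →
      ∀ d : GV L n m → GV L n m → ℝ, IsGadgetSPMetric T ε d →
        ∃ E : Finset (Sym2 (GV L n m)), iBGPFeasible d ↑E ∧
          E.card ≤ L * hstar + L + (m + n + 4) ^ 2 := by
  classical
  open Stmt7 GV SimpleGraph in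
  obtain ⟨Hs, hHs, hcard⟩ := hstar_ex
  have hden : (0:ℝ) < (L:ℝ) + n + m + 3 := by positivity
  refine ⟨0.01 / ((L:ℝ) + n + m + 3), by positivity, ?_⟩
  intro ε hε hε' d hd
  have hsum : ((L:ℝ) + n + m + 3) * ε ≤ 0.01 := by
    have h := (lt_div_iff₀ hden).mp hε'
    nlinarith
  have hLn : (0:ℝ) ≤ n := Nat.cast_nonneg n
  have hLm : (0:ℝ) ≤ m := Nat.cast_nonneg m
  have hLL : (1:ℝ) ≤ L := by exact_mod_cast hL
  have hLε : (L:ℝ) * ε ≤ 0.01 := by nlinarith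
  have hnε : (n:ℝ) * ε ≤ 0.01 := by nlinarith
  have hmε : (m:ℝ) * ε ≤ 0.01 := by nlinarith
  have hε01 : ε ≤ 0.01 := by nlinarith
  obtain ⟨⟨hrefl, hsymm, htri⟩, hB, hmax⟩ := hd
  have hd' : IsGadgetSPMetric T ε d := ⟨⟨hrefl, hsymm, htri⟩, hB, hmax⟩
  -- the case m = 0 is impossible
  rcases Nat.eq_zero_or_pos m with hm0 | hm0
  · exfalso
    subst hm0
    have hkey := hmax (fun p q => d p q + |chi p - chi q|)
      ⟨fun p => by show d p p + |chi p - chi p| = 0; simp [hrefl p],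
       fun p q => by
         show d p q + |chi p - chi q| = d q p + |chi q - chi p|
         rw [hsymm p q, abs_sub_comm],
       fun p q r => by
         show d p r + |chi p - chi r| ≤
           (d p q + |chi p - chi q|) + (d q r + |chi q - chi r|)
         have h1 := htri p q r
         have h2 := abs_sub_le (chi p) (chi q) (chi r)
         linarith⟩
      ⟨fun k => by simpa [chi] using hB.1 k,
       fun k j => j.elim0,
       by simpa [chi] using hB.2.2.1,
       fun i => by simpa [chi] using hB.2.2.2.1 i,
       by simpa [chi] using hB.2.2.2.2.1,
       fun i => by simpa [chi] using hB.2.2.2.2.2.1 i,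
       fun i j => j.elim0,
       fun j => j.elim0⟩ GV.z GV.h
    have hkey' : d GV.z GV.h + |chi (GV.z : GV L n 0) - chi (GV.h : GV L n 0)| ≤ d GV.z GV.h := hkey
    simp only [chi] at hkey'
    rw [show |(0:ℝ) - 1| = 1 by norm_num] at hkey'
    linarith
  -- now m ≥ 1
  obtain ⟨j0, hKj0⟩ : ∃ j : Fin m, K j = 1 := ⟨⟨0, hm0⟩, by simp [K]⟩
  -- edge upper bounds in K-form
  have u_xz : ∀ k : Fin L, d (x k) z ≤ 20 + K k * ε := fun k => hB.1 k
  have u_xb : ∀ (k : Fin L) (j : Fin m), d (x k) (b j) ≤ 21.4 + K k * ε + K j * ε := by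
    intro k j
    have h := hB.2.1 k j
    unfold K
    linarith
  have u_zy : d z y ≤ 1.5 := hB.2.2.1
  have u_za : ∀ i : Fin n, d z (a i) ≤ 1 + K i * ε := fun i => hB.2.2.2.1 i
  have u_zu : d z u ≤ 2 := hB.2.2.2.2.1
  have u_au : ∀ i : Fin n, d (a i) u ≤ 1.1 := hB.2.2.2.2.2.1
  have u_ab : ∀ (i : Fin n) (j : Fin m), i ∈ T j →
      d (a i) (b j) ≤ 1 + K i * ε + K j * ε := by
    intro i j hij
    have h := hB.2.2.2.2.2.2.1 i j hij
    unfold K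
    linarith
  have u_bh : ∀ j : Fin m, d (b j) h ≤ 1 + K j * ε := fun j => hB.2.2.2.2.2.2.2 j
  have sL : ∀ k : Fin L, 0 ≤ K k * ε ∧ K k * ε ≤ 0.01 := fun k => Kmul k hε.le hLε
  have sn : ∀ i : Fin n, 0 ≤ K i * ε ∧ K i * ε ≤ 0.01 := fun i => Kmul i hε.le hnε
  have sm : ∀ j : Fin m, 0 ≤ K j * ε ∧ K j * ε ≤ 0.01 := fun j => Kmul j hε.le hmε
  -- derived upper bounds
  have u_zb : ∀ j : Fin m, d z (b j) ≤ 2.03 := by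
    intro j
    obtain ⟨i, hiH, hiT⟩ := hHs j
    have h1 := htri z (a i) (b j)
    have h2 := u_za i
    have h3 := u_ab i j hiT
    linarith [(sn i).1, (sn i).2, (sm j).1, (sm j).2]
  have u_zh : d z h ≤ 3.04 := by
    have h1 := htri z (b j0) h
    have h2 := u_zb j0
    have h3 := u_bh j0
    rw [hKj0] at h3
    linarith
  have u_xa : ∀ (k : Fin L) (i : Fin n), d (x k) (a i) ≤ 21 + K k * ε + K i * ε := by
    intro k i
    have h1 := htri (x k) z (a i)
    linarith [u_xz k, u_za i]
  have u_xy : ∀ k : Fin L, d (x k) y ≤ 21.5 + K k * ε := by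
    intro k
    have h1 := htri (x k) z y
    linarith [u_xz k, u_zy]
  have u_xu : ∀ k : Fin L, d (x k) u ≤ 22 + K k * ε := by
    intro k
    have h1 := htri (x k) z u
    linarith [u_xz k, u_zu]
  have u_xh : ∀ k : Fin L, d (x k) h ≤ 22.4 + 2 * ε + K k * ε := by
    intro k
    have h1 := htri (x k) (b j0) h
    have h2 := u_xb k j0
    have h3 := u_bh j0
    rw [hKj0] at h2 h3
    linarith
  -- lower bounds via potentials
  have pz := fun (p q : GV L n m) =>
    pot hd' (fz ε) (fz_bounds hε hLε hnε hmε hε01) p q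
  have py := fun (p q : GV L n m) =>
    pot hd' (fy ε) (fy_bounds hε hLε hnε hmε hε01) p q
  have pu := fun (p q : GV L n m) =>
    pot hd' (fu ε) (fu_bounds hε hLε hnε hmε hε01) p q
  have ph := fun (p q : GV L n m) =>
    pot hd' (fh ε) (fh_bounds hε hLε hnε hmε hε01) p q
  have pa := fun (i : Fin n) (p q : GV L n m) =>
    pot hd' (fa ε i) (fa_bounds hε hLε hnε hmε hε01 i) p q
  have pb := fun (j : Fin m) (p q : GV L n m) =>
    pot hd' (fb ε j) (fb_bounds hε hLε hnε hmε hε01 j) p q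
  have pp := fun (k1 k2 : Fin L) (p q : GV L n m) =>
    pot hd' (fp ε k1 k2) (fp_bounds hε hLε hnε hmε hε01 k1 k2) p q
  have F : Facts L n m T ε d := by
    refine ⟨hrefl, hsymm, htri, hε, hε01, sL, sn, sm, u_xz, u_xb, u_zy, u_za, u_zu,
      u_au, u_ab, u_bh, u_zb, u_zh, u_xa, u_xy, u_xu, u_xh,
      ?_, ?_, ?_, ?_, ?_, ?_, ?_, ?_, ?_, ?_, ?_, ?_, ?_, ?_, ?_, ?_⟩
    · intro k; have := pz z (x k); simp only [fz] at this; linarith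
    · have := pz z y; simp only [fz] at this; linarith
    · intro i; have := pz z (a i); simp only [fz] at this; linarith
    · have := pz z u; simp only [fz] at this; linarith
    · intro j; have := pz z (b j); simp only [fz] at this; linarith [(sm j).1]
    · have := pz z h; simp only [fz] at this; linarith
    · intro k; have := py y (x k); simp only [fy] at this; linarith
    · intro i; have := py y (a i); simp only [fy] at this; linarith [(sn i).1]
    · intro k; have := pu u (x k); simp only [fu] at this; linarith
    · intro i; have := pu u (a i); simp only [fu] at this; linarith
    · intro i k; have := pa i (a i) (x k); simp [fa] at this; linarith
    · intro i j; have := pa i (a i) (b j); simp [fa] at this; linarith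
    · intro i; have := pa i (a i) h; simp [fa] at this; linarith [(sn i).1]
    · intro j k; have := pb j (b j) (x k); simp [fb] at this; linarith
    · intro k; have := ph h (x k); simp only [fh] at this; linarith
    · intro k k' hkk
      have := pp k' k (x k) (x k')
      simp [fp, hkk] at this
      linarith
  -- the edge set
  refine ⟨gE L n m Hs, ?_, ?_⟩
  · -- feasibility
    intro p q
    have hcz : (GV.z : GV L n m) ∈ core L n m := mem_core GV.z (fun _ hk => by cases hk)
    have hcy : (GV.y : GV L n m) ∈ core L n m := mem_core GV.y (fun _ hk => by cases hk)
    have hcu : (GV.u : GV L n m) ∈ core L n m := mem_core GV.u (fun _ hk => by cases hk)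
    have hch : (GV.h : GV L n m) ∈ core L n m := mem_core GV.h (fun _ hk => by cases hk)
    have hca : ∀ i : Fin n, (GV.a i : GV L n m) ∈ core L n m :=
      fun i => mem_core (GV.a i) (fun _ hk => by cases hk)
    have hcb : ∀ j : Fin m, (GV.b j : GV L n m) ∈ core L n m :=
      fun j => mem_core (GV.b j) (fun _ hk => by cases hk)
    have hedge : ∀ v w : GV L n m, v ∈ core L n m → w ∈ core L n m →
        s(v, w) ∈ (↑(gE L n m Hs) : Set (Sym2 (GV L n m))) :=
      fun v w hv hw => Finset.mem_coe.mpr (mem_gE_core hv hw)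
    have hcc : ∀ p' q' : GV L n m, p' ∈ core L n m → q' ∈ core L n m →
        ∃ w : (fromEdgeSet (↑(gE L n m Hs) : Set (Sym2 (GV L n m)))).Walk q' p',
          ∀ v ∈ w.support, v ∈ iBGPSafeSet d p' q' := by
      intro p' q' hp' hq'
      by_cases hpq : q' = p'
      · subst hpq; exact feas_nil d _ q'
      · exact feas_one d _ (hedge q' p' hq' hp') hpq
    have hxz : ∀ k : Fin L, s(x k, (z : GV L n m)) ∈ (↑(gE L n m Hs) : Set (Sym2 (GV L n m))) :=
      fun k => Finset.mem_coe.mpr (mem_gE_xz k)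
    have hzx : ∀ k : Fin L, s((z : GV L n m), x k) ∈ (↑(gE L n m Hs) : Set (Sym2 (GV L n m))) := by
      intro k; rw [Sym2.eq_swap]; exact hxz k
    cases p with
    | x k =>
      cases q with
      | x k' =>
        by_cases hkk : k' = k
        · subst hkk
          exact feas_nil d _ _
        · exact feas_two d _ (hxz k') (hzx k) (by simp) (by simp)
            (F.safeB k k' (Ne.symm hkk))
      | z =>
        exact feas_one d _ (hzx k) (by simp)
      | y =>
        exact feas_two d _ (hedge GV.y GV.z hcy hcz) (hzx k) (by simp) (by simp)
          (F.safeD_y k)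
      | u =>
        exact feas_two d _ (hedge GV.u GV.z hcu hcz) (hzx k) (by simp) (by simp)
          (F.safeD_u k)
      | h =>
        exact feas_two d _ (hedge GV.h GV.z hch hcz) (hzx k) (by simp) (by simp)
          (F.safeD_h k)
      | a i =>
        exact feas_two d _ (hedge (GV.a i) GV.z (hca i) hcz) (hzx k)
          (by simp) (by simp) (F.safeD_a k i)
      | b j =>
        obtain ⟨i, hiH, hiT⟩ := hHs j
        refine feas_two d _ (hedge (GV.b j) (GV.a i) (hcb j) (hca i))
          ?_ (by simp) (by simp) (F.safeE k j i hiT)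
        rw [Sym2.eq_swap]
        exact Finset.mem_coe.mpr (mem_gE_xa k hiH)
    | z =>
      cases q with
      | x k =>
        exact feas_one d _ (hxz k) (by simp)
      | z =>
        exact hcc _ _ hcz hcz
      | y =>
        exact hcc _ _ hcz hcy
      | u =>
        exact hcc _ _ hcz hcu
      | h =>
        exact hcc _ _ hcz hch
      | a i' =>
        exact hcc _ _ hcz (hca i')
      | b j' =>
        exact hcc _ _ hcz (hcb j')
    | y =>
      cases q with
      | x k =>
        exact feas_two d _ (hxz k) (hedge GV.z GV.y hcz hcy) (by simp) (by simp)
          (F.safeC y 21.5 (by norm_num) (by rw [F.symm]; linarith [F.u_zy])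
            F.l_yx (fun k' => by rw [F.symm]; exact F.u_xy k') k)
      | z =>
        exact hcc _ _ hcy hcz
      | y =>
        exact hcc _ _ hcy hcy
      | u =>
        exact hcc _ _ hcy hcu
      | h =>
        exact hcc _ _ hcy hch
      | a i' =>
        exact hcc _ _ hcy (hca i')
      | b j' =>
        exact hcc _ _ hcy (hcb j')
    | u =>
      cases q with
      | x k =>
        exact feas_two d _ (hxz k) (hedge GV.z GV.u hcz hcu) (by simp) (by simp)
          (F.safeC u 22 (by norm_num) (by rw [F.symm]; linarith [F.u_zu])
            F.l_ux (fun k' => by rw [F.symm]; exact F.u_xu k') k)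
      | z =>
        exact hcc _ _ hcu hcz
      | y =>
        exact hcc _ _ hcu hcy
      | u =>
        exact hcc _ _ hcu hcu
      | h =>
        exact hcc _ _ hcu hch
      | a i' =>
        exact hcc _ _ hcu (hca i')
      | b j' =>
        exact hcc _ _ hcu (hcb j')
    | h =>
      cases q with
      | x k =>
        exact feas_two d _ (hxz k) (hedge GV.z GV.h hcz hch) (by simp) (by simp)
          (F.safeC h (22.4 + 2 * ε) (by linarith) (by rw [F.symm]; linarith [F.u_zh])
            F.l_hx (fun k' => by rw [F.symm]; exact F.u_xh k') k)
      | z =>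
        exact hcc _ _ hch hcz
      | y =>
        exact hcc _ _ hch hcy
      | u =>
        exact hcc _ _ hch hcu
      | h =>
        exact hcc _ _ hch hch
      | a i' =>
        exact hcc _ _ hch (hca i')
      | b j' =>
        exact hcc _ _ hch (hcb j')
    | a i =>
      cases q with
      | x k =>
        exact feas_two d _ (hxz k) (hedge GV.z (GV.a i) hcz (hca i))
          (by simp) (by simp)
          (F.safeC (a i) (21 + K i * ε) (by linarith [(sn i).1])
            (by rw [F.symm]; linarith [F.u_za i, (sn i).2])
            (F.l_ax i) (fun k' => by rw [F.symm]; linarith [F.u_xa k' i]) k)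
      | z =>
        exact hcc _ _ (hca i) hcz
      | y =>
        exact hcc _ _ (hca i) hcy
      | u =>
        exact hcc _ _ (hca i) hcu
      | h =>
        exact hcc _ _ (hca i) hch
      | a i' =>
        exact hcc _ _ (hca i) (hca i')
      | b j' =>
        exact hcc _ _ (hca i) (hcb j')
    | b j =>
      cases q with
      | x k =>
        exact feas_two d _ (hxz k) (hedge GV.z (GV.b j) hcz (hcb j))
          (by simp) (by simp)
          (F.safeC (b j) (21.4 + K j * ε) (by linarith [(sm j).1])
            (by rw [F.symm]; linarith [F.u_zb j])
            (F.l_bx j) (fun k' => by rw [F.symm]; linarith [F.u_xb k' j]) k)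
      | z =>
        exact hcc _ _ (hcb j) hcz
      | y =>
        exact hcc _ _ (hcb j) hcy
      | u =>
        exact hcc _ _ (hcb j) hcu
      | h =>
        exact hcc _ _ (hcb j) hch
      | a i' =>
        exact hcc _ _ (hcb j) (hca i')
      | b j' =>
        exact hcc _ _ (hcb j) (hcb j')
  · -- cardinality
    have := gE_card L n m Hs
    rw [hcard] at this
    omega
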